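/- Let d ≥ 2, let b ∈ ℝ^d be a nonzero vector, and let H be a real symmetric positive definite d×d matrix. For v ∈ ℝ^d write v = v₁ (b/|b|) + v' with v₁ ∈ ℝ and v' ⊥ b. Then there is a constant C > 0 such that | i (b·v) − ½ v·Hv | ≥ C |v₁|^{3/4} |v'|^{1/2} for all v ∈ ℝ^d. Moreover, the function v ↦ |v₁|^{−3/4} |v'|^{−1/2} is integrable over the unit ball of ℝ^d. -/

import Mathlib

open Metric MeasureTheory Set
open scoped RealInnerProductSpace

private lemma aux_measurable_abs_rpow (c : ℝ) : Measurable fun t : ℝ => |t| ^ c := by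
  have h : (fun t : ℝ => |t| ^ c) =
      fun t => if t = 0 then (0 : ℝ) ^ c else Real.exp (Real.log |t| * c) := by
    funext t
    by_cases ht : t = 0
    · simp [ht]
    · rw [if_neg ht, Real.rpow_def_of_pos (abs_pos.2 ht)]
  rw [h]
  exact Measurable.ite (measurableSet_eq) measurable_const
    (((Real.measurable_log.comp measurable_abs).mul measurable_const).exp)

private lemma aux_abs_rpow_integrable {r : ℝ} (hr : -1 < r) :
    IntegrableOn (fun t : ℝ => |t| ^ r) (Set.Icc (-1 : ℝ) 1) := by
  have h1 : IntegrableOn (fun t : ℝ => |t| ^ r) (Set.Ioc (0 : ℝ) 1) := by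
    have h := intervalIntegral.intervalIntegrable_rpow' (a := (0 : ℝ)) (b := 1) hr
    rw [intervalIntegrable_iff, Set.uIoc_of_le (zero_le_one)] at h
    exact h.congr_fun (fun x hx => by rw [abs_of_pos hx.1]) measurableSet_Ioc
  have h2 : IntegrableOn (fun t : ℝ => |t| ^ r) (Set.Ico (-1 : ℝ) 0) := by
    have e : MeasurePreserving (Neg.neg : ℝ → ℝ) volume volume :=
      Measure.measurePreserving_neg _
    have hemb : MeasurableEmbedding (Neg.neg : ℝ → ℝ) :=
      (Homeomorph.neg ℝ).measurableEmbedding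
    have h3 := (e.integrableOn_comp_preimage hemb
      (f := fun t : ℝ => |t| ^ r) (s := Set.Ioc (0 : ℝ) 1)).2 h1
    have hpre : (Neg.neg : ℝ → ℝ) ⁻¹' Set.Ioc (0 : ℝ) 1 = Set.Ico (-1 : ℝ) 0 := by
      ext t
      simp only [Set.mem_preimage, Set.mem_Ioc, Set.mem_Ico]
      constructor
      · rintro ⟨h4, h5⟩; constructor <;> linarith
      · rintro ⟨h4, h5⟩; constructor <;> linarith
    rw [hpre] at h3
    refine h3.congr_fun (fun x _ => ?_) measurableSet_Ico
    simp [Function.comp, abs_neg]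
  have h4 : IntegrableOn (fun t : ℝ => |t| ^ r) (Set.Icc (0 : ℝ) 1) := by
    rwa [integrableOn_Icc_iff_integrableOn_Ioc]
  have h5 := h2.union h4
  refine h5.mono_set fun t ht => ?_
  rcases lt_or_ge t 0 with h | h
  · exact Or.inl ⟨ht.1, h⟩
  · exact Or.inr ⟨h, ht.2⟩

set_option maxHeartbeats 1000000 in
/-- for `b ≠ 0` and `H` symmetric positive definite, writing
`v = v₁ (b/|b|) + v'` with `v' ⊥ b`, one has `|i(b·v) - ½ v·Hv| ≥ C |v₁|^{3/4} |v'|^{1/2}`,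
and `|v₁|^{-3/4}|v'|^{-1/2}` is integrable over the unit ball. -/
theorem stmt_16 {d : ℕ} (hd : 2 ≤ d) (b : EuclideanSpace ℝ (Fin d)) (hb : b ≠ 0)
    (H : Matrix (Fin d) (Fin d) ℝ) (hHs : H.IsSymm) (hHp : H.PosDef) :
    (∃ C : ℝ, 0 < C ∧ ∀ v : EuclideanSpace ℝ (Fin d),
      C * |⟪v, b⟫ / ‖b‖| ^ ((3 : ℝ) / 4) *
          ‖v - (⟪v, b⟫ / ‖b‖ ^ 2) • b‖ ^ ((1 : ℝ) / 2) ≤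
        ‖Complex.I * ((⟪b, v⟫ : ℝ) : ℂ) -
          (1 / 2 : ℂ) * ((∑ i, ∑ j, H i j * v i * v j : ℝ) : ℂ)‖) ∧
    IntegrableOn
      (fun v : EuclideanSpace ℝ (Fin d) =>
        |⟪v, b⟫ / ‖b‖| ^ (-(3 : ℝ) / 4) * ‖v - (⟪v, b⟫ / ‖b‖ ^ 2) • b‖ ^ (-(1 : ℝ) / 2))
      (ball 0 1) := by
  classical
  have hbn : (0 : ℝ) < ‖b‖ := norm_pos_iff.2 hb
  -- the quadratic form
  set Q : EuclideanSpace ℝ (Fin d) → ℝ := fun v => ∑ i, ∑ j, H i j * v i * v j with hQdef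
  have hQcont : Continuous Q := by
    refine continuous_finset_sum _ fun i _ => continuous_finset_sum _ fun j _ => ?_
    have hcoord : ∀ k : Fin d, Continuous fun v : EuclideanSpace ℝ (Fin d) => v k := by
      intro k
      exact (EuclideanSpace.proj k).continuous
    exact (continuous_const.mul (hcoord i)).mul (hcoord j)
  have hQpos : ∀ v : EuclideanSpace ℝ (Fin d), v ≠ 0 → 0 < Q v := by
    intro v hv
    have hv' : (fun i => v i) ≠ (0 : Fin d → ℝ) := by
      intro h
      exact hv (PiLp.ext fun i => congrFun h i)
    have h := hHp.dotProduct_mulVec_pos hv'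
    have hQdot : Q v = dotProduct (fun i => v i) (H.mulVec fun i => v i) := by
      simp only [hQdef, dotProduct, Matrix.mulVec, Finset.mul_sum]
      exact Finset.sum_congr rfl fun i _ => Finset.sum_congr rfl fun j _ => by ring
    rw [hQdot]
    simpa using h
  have hQsmul : ∀ (c : ℝ) (v : EuclideanSpace ℝ (Fin d)), Q (c • v) = c ^ 2 * Q v := by
    intro c v
    simp only [hQdef, PiLp.smul_apply, smul_eq_mul, Finset.mul_sum]
    exact Finset.sum_congr rfl fun i _ => Finset.sum_congr rfl fun j _ => by ring
  have : Nontrivial (EuclideanSpace ℝ (Fin d)) := nontrivial_of_ne b 0 hb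
  have hsne : (sphere (0 : EuclideanSpace ℝ (Fin d)) 1).Nonempty :=
    ⟨‖b‖⁻¹ • b, by
      rw [mem_sphere_zero_iff_norm, norm_smul, norm_inv, norm_norm,
        inv_mul_cancel₀ hbn.ne']⟩
  obtain ⟨w, hw, hmin⟩ := (isCompact_sphere (0 : EuclideanSpace ℝ (Fin d)) 1).exists_isMinOn
    hsne hQcont.continuousOn
  have hwn : ‖w‖ = 1 := mem_sphere_zero_iff_norm.1 hw
  have hw0 : w ≠ 0 := by
    intro h; rw [h, norm_zero] at hwn; exact zero_ne_one hwn
  set μ : ℝ := Q w with hμdef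
  have hμ : 0 < μ := hQpos w hw0
  have hQlower : ∀ v : EuclideanSpace ℝ (Fin d), μ * ‖v‖ ^ 2 ≤ Q v := by
    intro v
    rcases eq_or_ne v 0 with rfl | hv
    · have : Q (0 : EuclideanSpace ℝ (Fin d)) = 0 := by
        have := hQsmul 0 0
        simpa using this
      simp [this]
    · have hnv : 0 < ‖v‖ := norm_pos_iff.2 hv
      have hmem : (‖v‖⁻¹ • v) ∈ sphere (0 : EuclideanSpace ℝ (Fin d)) 1 := by
        rw [mem_sphere_zero_iff_norm, norm_smul, norm_inv, norm_norm,
          inv_mul_cancel₀ hnv.ne']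
      have h1 : Q w ≤ Q (‖v‖⁻¹ • v) := hmin hmem
      rw [hQsmul] at h1
      have h2 : μ * ‖v‖ ^ 2 ≤ (‖v‖⁻¹ ^ 2 * Q v) * ‖v‖ ^ 2 :=
        mul_le_mul_of_nonneg_right h1 (sq_nonneg _)
      calc μ * ‖v‖ ^ 2 ≤ (‖v‖⁻¹ ^ 2 * Q v) * ‖v‖ ^ 2 := h2
        _ = Q v := by field_simp
  have hperp : ∀ v : EuclideanSpace ℝ (Fin d), ‖v - (⟪v, b⟫ / ‖b‖ ^ 2) • b‖ ≤ ‖v‖ := by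
    intro v
    set c : ℝ := ⟪v, b⟫ / ‖b‖ ^ 2 with hc
    have horth : ⟪v - c • b, c • b⟫ = 0 := by
      rw [inner_sub_left, real_inner_smul_left, real_inner_smul_right,
        real_inner_smul_right, real_inner_self_eq_norm_sq, hc]
      field_simp
      ring
    have key : ‖v‖ ^ 2 = ‖v - c • b‖ ^ 2 + 2 * ⟪v - c • b, c • b⟫ + ‖c • b‖ ^ 2 := by
      rw [← norm_add_sq_real, sub_add_cancel]
    rw [horth] at key
    nlinarith [norm_nonneg (v - c • b), norm_nonneg v, sq_nonneg ‖c • b‖]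
  constructor
  · -- Part 1
    refine ⟨‖b‖ ^ ((3 : ℝ) / 4) * (μ / 2) ^ ((1 : ℝ) / 4), by positivity, fun v => ?_⟩
    set z : ℂ := Complex.I * ((⟪b, v⟫ : ℝ) : ℂ) - (1 / 2 : ℂ) * ((Q v : ℝ) : ℂ) with hz
    set M : ℝ := ‖z‖ with hM
    have hM0 : 0 ≤ M := norm_nonneg z
    have him : z.im = ⟪b, v⟫ := by simp [hz]
    have hre : z.re = -(Q v) / 2 := by simp [hz]; ring
    have hQv0 : 0 ≤ Q v := le_trans (by positivity) (hQlower v)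
    have h1 : |⟪b, v⟫| ≤ M := by
      rw [← him]; exact Complex.abs_im_le_norm z
    have h2 : Q v / 2 ≤ M := by
      have h := Complex.abs_re_le_norm z
      rw [hre, abs_div, abs_neg, abs_of_nonneg hQv0] at h
      simpa using h
    set a : ℝ := |⟪v, b⟫ / ‖b‖| with ha
    set s : ℝ := ‖v - (⟪v, b⟫ / ‖b‖ ^ 2) • b‖ with hs
    have ha0 : 0 ≤ a := abs_nonneg _
    have hs0 : 0 ≤ s := norm_nonneg _
    have hba : ‖b‖ * a = |⟪b, v⟫| := by
      rw [ha, abs_div, abs_of_pos hbn, real_inner_comm]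
      field_simp
    have hbaM : ‖b‖ * a ≤ M := by rw [hba]; exact h1
    have hsM : μ / 2 * s ^ 2 ≤ M := by
      have h3 : s ≤ ‖v‖ := hperp v
      have h4' : s ^ 2 ≤ ‖v‖ ^ 2 := by nlinarith [hs0, h3]
      have h4 : μ * s ^ 2 ≤ μ * ‖v‖ ^ 2 := mul_le_mul_of_nonneg_left h4' hμ.le
      have h5 : μ * s ^ 2 ≤ Q v := le_trans h4 (hQlower v)
      linarith
    have key : ‖b‖ ^ ((3 : ℝ) / 4) * (μ / 2) ^ ((1 : ℝ) / 4) * a ^ ((3 : ℝ) / 4) *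
        s ^ ((1 : ℝ) / 2) = (‖b‖ * a) ^ ((3 : ℝ) / 4) * ((μ / 2) * s ^ 2) ^ ((1 : ℝ) / 4) := by
      rw [Real.mul_rpow hbn.le ha0, Real.mul_rpow (by positivity) (sq_nonneg s)]
      have : ((s ^ 2 : ℝ)) ^ ((1 : ℝ) / 4) = s ^ ((1 : ℝ) / 2) := by
        rw [← Real.rpow_natCast s 2, ← Real.rpow_mul hs0]
        norm_num
      rw [this]; ring
    rw [key]
    calc (‖b‖ * a) ^ ((3 : ℝ) / 4) * ((μ / 2) * s ^ 2) ^ ((1 : ℝ) / 4)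
        ≤ M ^ ((3 : ℝ) / 4) * M ^ ((1 : ℝ) / 4) := by
          exact mul_le_mul (Real.rpow_le_rpow (by positivity) hbaM (by norm_num))
            (Real.rpow_le_rpow (by positivity) hsM (by norm_num))
            (Real.rpow_nonneg (by positivity) _) (Real.rpow_nonneg hM0 _)
      _ = M := by
          rw [← Real.rpow_add' hM0 (by norm_num)]
          norm_num
  · -- Part 2: integrability
    set u : EuclideanSpace ℝ (Fin d) := ‖b‖⁻¹ • b with hu
    have hun : ‖u‖ = 1 := by
      rw [hu, norm_smul, norm_inv, norm_norm, inv_mul_cancel₀ hbn.ne']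
    set i0 : Fin d := ⟨0, by omega⟩ with hi0
    set i1 : Fin d := ⟨1, by omega⟩ with hi1
    have hi01 : i0 ≠ i1 := by simp [hi0, hi1, Fin.ext_iff]
    have hcard : Module.finrank ℝ (EuclideanSpace ℝ (Fin d)) = Fintype.card (Fin d) := by
      simp [finrank_euclideanSpace]
    have horth : Orthonormal ℝ (({i0} : Set (Fin d)).restrict fun _ => u) := by
      constructor
      · intro i; exact hun
      · intro i j hij
        exact absurd (Subtype.ext ((i.2 : (i : Fin d) ∈ ({i0} : Set (Fin d)))
          |>.trans (j.2 : (j : Fin d) ∈ ({i0} : Set (Fin d))).symm)) hij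
    obtain ⟨B, hB⟩ := Orthonormal.exists_orthonormalBasis_extension_of_card_eq hcard horth
    have hBi0 : B i0 = u := hB i0 rfl
    have hrepr : ∀ (v : EuclideanSpace ℝ (Fin d)) (i : Fin d), B.repr v i = ⟪B i, v⟫ :=
      fun v i => B.repr_apply_apply v i
    have hcoord0 : ∀ v : EuclideanSpace ℝ (Fin d), ⟪v, b⟫ / ‖b‖ = B.repr v i0 := by
      intro v
      rw [hrepr, hBi0, hu, real_inner_smul_left, real_inner_comm, div_eq_inv_mul]
    have hcoord1 : ∀ v : EuclideanSpace ℝ (Fin d),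
        |B.repr v i1| ≤ ‖v - (⟪v, b⟫ / ‖b‖ ^ 2) • b‖ := by
      intro v
      set c : ℝ := ⟪v, b⟫ / ‖b‖ ^ 2 with hc
      have hb1 : ⟪B i1, b⟫ = 0 := by
        have h0 : ⟪B i1, B i0⟫ = 0 := B.orthonormal.2 (show i1 ≠ i0 from hi01.symm)
        rw [hBi0, hu, real_inner_smul_right] at h0
        rcases mul_eq_zero.1 h0 with h | h
        · exact absurd h (inv_ne_zero hbn.ne')
        · exact h
      have heq : B.repr v i1 = ⟪B i1, v - c • b⟫ := by
        rw [hrepr, inner_sub_right, real_inner_smul_right, hb1, mul_zero, sub_zero]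
      rw [heq]
      calc |⟪B i1, v - c • b⟫| ≤ ‖B i1‖ * ‖v - c • b‖ := abs_real_inner_le_norm _ _
        _ = ‖v - c • b‖ := by rw [B.orthonormal.1 i1, one_mul]
    -- the product dominating function on the pi space
    set F : Fin d → ℝ → ℝ := fun i t => Set.indicator (Set.Icc (-1 : ℝ) 1)
      (fun t => if i = i0 then |t| ^ (-(3 : ℝ) / 4)
        else if i = i1 then |t| ^ (-(1 : ℝ) / 2) else 1) t with hF
    have hFint : ∀ i, Integrable (F i) := by
      intro i
      rw [hF]
      rw [integrable_indicator_iff measurableSet_Icc]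
      by_cases h0 : i = i0
      · simp only [h0, if_pos rfl]
        exact aux_abs_rpow_integrable (by norm_num)
      · by_cases h1 : i = i1
        · simp only [h1, if_neg (h1 ▸ hi01.symm : i1 ≠ i0), if_pos rfl]
          exact aux_abs_rpow_integrable (by norm_num)
        · simp only [if_neg h0, if_neg h1]
          exact integrableOn_const measure_Icc_lt_top.ne
    have hGpi : Integrable (fun x : Fin d → ℝ => ∏ i, F i (x i)) :=
      Integrable.fintype_prod hFint
    -- transfer to EuclideanSpace
    have hGeuc : Integrable (fun x : EuclideanSpace ℝ (Fin d) => ∏ i, F i (x i)) := by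
      have hme := EuclideanSpace.volume_preserving_symm_measurableEquiv_toLp (Fin d)
      exact (hme.integrable_comp_emb
        (MeasurableEquiv.measurableEmbedding _)).2 hGpi
    -- the dominating function on EuclideanSpace and its cube
    set T : Set (EuclideanSpace ℝ (Fin d)) := {x | ∀ i, x i ∈ Set.Icc (-1 : ℝ) 1} with hT
    have hcoordmeas : ∀ i : Fin d,
        Measurable fun x : EuclideanSpace ℝ (Fin d) => x i := by
      intro i
      exact (measurable_pi_apply i).comp
        (MeasurableEquiv.toLp 2 (Fin d → ℝ)).symm.measurable
    have hTmeas : MeasurableSet T := by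
      have : T = ⋂ i, (fun x : EuclideanSpace ℝ (Fin d) => x i) ⁻¹' Set.Icc (-1 : ℝ) 1 := by
        ext x; simp [hT]
      rw [this]
      exact MeasurableSet.iInter fun i => (hcoordmeas i) measurableSet_Icc
    set h : EuclideanSpace ℝ (Fin d) → ℝ :=
      fun x => |x i0| ^ (-(3 : ℝ) / 4) * |x i1| ^ (-(1 : ℝ) / 2) with hh
    have hhT : IntegrableOn h T := by
      rw [← integrable_indicator_iff hTmeas]
      have hprod : ∀ x : EuclideanSpace ℝ (Fin d),
          T.indicator h x = ∏ i, F i (x i) := by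
        intro x
        by_cases hx : x ∈ T
        · rw [Set.indicator_of_mem hx]
          have hfac : ∀ i, F i (x i) = if i = i0 then |x i| ^ (-(3 : ℝ) / 4)
              else if i = i1 then |x i| ^ (-(1 : ℝ) / 2) else 1 :=
            fun i => Set.indicator_of_mem (hx i) _
          rw [Finset.prod_congr rfl (fun i _ => hfac i)]
          rw [← Finset.mul_prod_erase _ _ (Finset.mem_univ i0),
            ← Finset.mul_prod_erase _ _
              (Finset.mem_erase.2 ⟨hi01.symm, Finset.mem_univ i1⟩)]
          rw [if_pos rfl, if_neg hi01.symm, if_pos rfl]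
          rw [Finset.prod_eq_one fun i hi => by
            rw [if_neg (Finset.ne_of_mem_erase (Finset.mem_of_mem_erase hi)),
              if_neg (Finset.ne_of_mem_erase hi)]]
          simp only [hh]
          ring
        · rw [Set.indicator_of_notMem hx]
          obtain ⟨i, hi⟩ := not_forall.1 hx
          exact (Finset.prod_eq_zero (Finset.mem_univ i)
            (Set.indicator_of_notMem hi _)).symm
      exact hGeuc.congr (Filter.Eventually.of_forall fun x => (hprod x).symm)
    -- pull back along B.repr
    have hrep := B.measurePreserving_repr
    have hemb : MeasurableEmbedding
        (B.repr : EuclideanSpace ℝ (Fin d) → EuclideanSpace ℝ (Fin d)) :=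
      B.repr.toHomeomorph.measurableEmbedding
    have hGball : IntegrableOn
        (fun v : EuclideanSpace ℝ (Fin d) =>
          |B.repr v i0| ^ (-(3 : ℝ) / 4) * |B.repr v i1| ^ (-(1 : ℝ) / 2))
        (ball 0 1) := by
      have h5 : IntegrableOn (h ∘ B.repr) (B.repr ⁻¹' T) :=
        (hrep.integrableOn_comp_preimage hemb).2 hhT
      refine h5.mono_set fun v hv => ?_
      have hvn : ‖v‖ < 1 := mem_ball_zero_iff.1 hv
      intro i
      have h6 : |B.repr v i| ≤ ‖B.repr v‖ := by
        have := EuclideanSpace.norm_eq (B.repr v)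
        rw [this, ← Real.sqrt_sq_eq_abs]
        refine Real.sqrt_le_sqrt ?_
        refine Finset.single_le_sum (f := fun j => ‖B.repr v j‖ ^ 2)
          (fun j _ => sq_nonneg _) (Finset.mem_univ i) |>.trans_eq' ?_
        rw [Real.norm_eq_abs, sq_abs]
      rw [B.repr.norm_map] at h6
      have h7 : |B.repr v i| ≤ 1 := le_of_lt (lt_of_le_of_lt h6 hvn)
      exact abs_le.1 h7
    -- measurability of the target function
    have hmeas : AEStronglyMeasurable
        (fun v : EuclideanSpace ℝ (Fin d) =>
          |⟪v, b⟫ / ‖b‖| ^ (-(3 : ℝ) / 4) * ‖v - (⟪v, b⟫ / ‖b‖ ^ 2) • b‖ ^ (-(1 : ℝ) / 2))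
        (volume.restrict (ball 0 1)) := by
      have hc1 : Continuous fun v : EuclideanSpace ℝ (Fin d) => ⟪v, b⟫ / ‖b‖ :=
        (continuous_id.inner continuous_const).div_const _
      have hc2 : Continuous fun v : EuclideanSpace ℝ (Fin d) =>
          ‖v - (⟪v, b⟫ / ‖b‖ ^ 2) • b‖ :=
        by fun_prop
      have hm1 : Measurable fun v : EuclideanSpace ℝ (Fin d) =>
          |⟪v, b⟫ / ‖b‖| ^ (-(3 : ℝ) / 4) :=
        (aux_measurable_abs_rpow _).comp hc1.measurable
      have hm2 : Measurable fun v : EuclideanSpace ℝ (Fin d) =>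
          ‖v - (⟪v, b⟫ / ‖b‖ ^ 2) • b‖ ^ (-(1 : ℝ) / 2) := by
        have : (fun v : EuclideanSpace ℝ (Fin d) =>
            ‖v - (⟪v, b⟫ / ‖b‖ ^ 2) • b‖ ^ (-(1 : ℝ) / 2)) =
            fun v => |‖v - (⟪v, b⟫ / ‖b‖ ^ 2) • b‖| ^ (-(1 : ℝ) / 2) := by
          funext v; rw [abs_norm]
        rw [this]
        exact (aux_measurable_abs_rpow _).comp hc2.measurable
      exact (hm1.mul hm2).aestronglyMeasurable
    -- the a.e. bound
    have hnull : volume {v : EuclideanSpace ℝ (Fin d) | B.repr v i1 = 0} = 0 := by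
      set φ : EuclideanSpace ℝ (Fin d) →ₗ[ℝ] ℝ :=
        { toFun := fun v => B.repr v i1
          map_add' := by intro x y; simp
          map_smul' := by intro c x; simp } with hφ
      have hker : {v : EuclideanSpace ℝ (Fin d) | B.repr v i1 = 0} =
          (LinearMap.ker φ : Set (EuclideanSpace ℝ (Fin d))) := by
        ext v; simp [hφ, LinearMap.mem_ker]
      rw [hker]
      refine Measure.addHaar_submodule _ _ ?_
      intro htop
      have h8 : B i1 ∈ LinearMap.ker φ := htop ▸ Submodule.mem_top
      rw [LinearMap.mem_ker] at h8
      have h9 : φ (B i1) = 1 := by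
        simp only [hφ, LinearMap.coe_mk, AddHom.coe_mk]
        rw [B.repr_self]
        simp [EuclideanSpace.single_apply]
      rw [h8] at h9
      exact one_ne_zero h9.symm
    refine Integrable.mono' hGball hmeas ?_
    refine ae_restrict_of_ae ?_
    have hae : ∀ᵐ v : EuclideanSpace ℝ (Fin d), B.repr v i1 ≠ 0 := by
      rw [ae_iff]
      simpa using hnull
    filter_upwards [hae] with v hv1
    rw [Real.norm_eq_abs, abs_of_nonneg (by positivity)]
    have heq0 : |⟪v, b⟫ / ‖b‖| ^ (-(3 : ℝ) / 4) = |B.repr v i0| ^ (-(3 : ℝ) / 4) := by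
      rw [hcoord0]
    rw [heq0]
    refine mul_le_mul_of_nonneg_left ?_ (Real.rpow_nonneg (abs_nonneg _) _)
    exact Real.rpow_le_rpow_of_nonpos (abs_pos.2 hv1) (hcoord1 v) (by norm_num)
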